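/- The SO's utility u₂(λ̄, f) = −c₀X̄(λ̄, μ, f) − c₂/(f̄ − f) is strictly concave in f on the open interval ((λ̄+μ)r/(ηλ̄+μ), f̄): its second derivative in f is strictly negative. -/

import Mathlib

/-- The SO's utility u₂(λ̄, f) = −c₀X̄(λ̄, μ, f) − c₂/(f̄−f) is strictly concave
in f on ((λ̄+μ)r/(ηλ̄+μ), f̄): its second derivative is strictly negative. -/
theorem stmt_12 (c₀ c₂ mu lambar η fbar r : ℝ)
    (hc₀ : 0 < c₀) (hc₂ : 0 < c₂) (hmu : 0 < mu) (hlam : 0 < lambar)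
    (hη : 0 < η) (hη1 : η < 1) (hfbar : 0 < fbar) (hr : 0 < r)
    (hint : (lambar + mu) * r / (η * lambar + mu) < fbar) :
    ∀ f ∈ Set.Ioo ((lambar + mu) * r / (η * lambar + mu)) fbar,
      deriv (deriv (fun f : ℝ =>
        -(c₀ * ((lambar / mu) * ((r - η * f) * (η * f - f))
            / (lambar * (r - η * f) + mu * (r - f))))
          - c₂ / (fbar - f))) f < 0 := by
  have hde : 0 < η * lambar + mu := by positivity
  -- denominator negative on the interval
  have hDneg : ∀ x ∈ Set.Ioo ((lambar + mu) * r / (η * lambar + mu)) fbar,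
      lambar * (r - η * x) + mu * (r - x) < 0 := by
    intro x hx
    have h := hx.1
    rw [div_lt_iff₀ hde] at h
    nlinarith [h]
  -- first derivative function
  set F₁ : ℝ → ℝ := fun x =>
    -(c₀ * ((lambar / mu * ((-η) * (η * x - x) + (r - η * x) * (η - 1))
          * (lambar * (r - η * x) + mu * (r - x))
        - lambar / mu * ((r - η * x) * (η * x - x)) * (lambar * (-η) + mu * (-1)))
        / (lambar * (r - η * x) + mu * (r - x)) ^ 2))
      - c₂ / (fbar - x) ^ 2 with hF₁def
  have hd1 : ∀ x ∈ Set.Ioo ((lambar + mu) * r / (η * lambar + mu)) fbar,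
      HasDerivAt (fun f : ℝ =>
        -(c₀ * ((lambar / mu) * ((r - η * f) * (η * f - f))
            / (lambar * (r - η * f) + mu * (r - f))))
          - c₂ / (fbar - f)) (F₁ x) x := by
    intro x hx
    have hDne : lambar * (r - η * x) + mu * (r - x) ≠ 0 := ne_of_lt (hDneg x hx)
    have hfb : fbar - x ≠ 0 := ne_of_gt (sub_pos.2 hx.2)
    have hA : HasDerivAt (fun y : ℝ => r - η * y) (-η) x := by
      simpa using ((hasDerivAt_id x).const_mul η).const_sub r
    have hB : HasDerivAt (fun y : ℝ => η * y - y) (η - 1) x := by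
      simpa [Pi.sub_def] using ((hasDerivAt_id x).const_mul η).sub (hasDerivAt_id x)
    have hN : HasDerivAt (fun y : ℝ => (r - η * y) * (η * y - y))
        ((-η) * (η * x - x) + (r - η * x) * (η - 1)) x := hA.mul hB
    have hr1 : HasDerivAt (fun y : ℝ => r - y) (-1) x := by
      simpa using (hasDerivAt_id x).const_sub r
    have hD : HasDerivAt (fun y : ℝ => lambar * (r - η * y) + mu * (r - y))
        (lambar * (-η) + mu * (-1)) x := (hA.const_mul lambar).add (hr1.const_mul mu)
    have hNum : HasDerivAt (fun y : ℝ => lambar / mu * ((r - η * y) * (η * y - y)))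
        (lambar / mu * ((-η) * (η * x - x) + (r - η * x) * (η - 1))) x :=
      hN.const_mul _
    have hquot := hNum.div hD hDne
    have hc := (hquot.const_mul c₀).neg
    have h2 : HasDerivAt (fun y : ℝ => c₂ / (fbar - y)) (c₂ / (fbar - x) ^ 2) x := by
      have hfb' : HasDerivAt (fun y : ℝ => fbar - y) (-1) x := by
        simpa using (hasDerivAt_id x).const_sub fbar
      have := (hasDerivAt_const x c₂).div hfb' hfb
      refine this.congr_deriv ?_
      ring
    exact hc.sub h2
  -- deriv of F agrees with F₁ on the open interval
  intro f hf
  have hmem : Set.Ioo ((lambar + mu) * r / (η * lambar + mu)) fbar ∈ nhds f :=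
    isOpen_Ioo.mem_nhds hf
  have hEq : deriv (fun f : ℝ =>
        -(c₀ * ((lambar / mu) * ((r - η * f) * (η * f - f))
            / (lambar * (r - η * f) + mu * (r - f))))
          - c₂ / (fbar - f)) =ᶠ[nhds f] F₁ :=
    Filter.eventuallyEq_of_mem hmem fun x hx => (hd1 x hx).deriv
  rw [hEq.deriv_eq]
  -- now differentiate F₁ at f
  have hDf : lambar * (r - η * f) + mu * (r - f) < 0 := hDneg f hf
  have hDne : lambar * (r - η * f) + mu * (r - f) ≠ 0 := ne_of_lt hDf
  have hfbpos : 0 < fbar - f := sub_pos.2 hf.2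
  have hfb : fbar - f ≠ 0 := ne_of_gt hfbpos
  have hA : HasDerivAt (fun y : ℝ => r - η * y) (-η) f := by
    simpa using ((hasDerivAt_id f).const_mul η).const_sub r
  have hB : HasDerivAt (fun y : ℝ => η * y - y) (η - 1) f := by
    simpa [Pi.sub_def] using ((hasDerivAt_id f).const_mul η).sub (hasDerivAt_id f)
  have hN : HasDerivAt (fun y : ℝ => (r - η * y) * (η * y - y))
      ((-η) * (η * f - f) + (r - η * f) * (η - 1)) f := hA.mul hB
  have hr1 : HasDerivAt (fun y : ℝ => r - y) (-1) f := by
    simpa using (hasDerivAt_id f).const_sub r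
  have hD : HasDerivAt (fun y : ℝ => lambar * (r - η * y) + mu * (r - y))
      (lambar * (-η) + mu * (-1)) f := (hA.const_mul lambar).add (hr1.const_mul mu)
  have hN' : HasDerivAt (fun y : ℝ => (-η) * (η * y - y) + (r - η * y) * (η - 1))
      ((-η) * (η - 1) + (-η) * (η - 1)) f :=
    (hB.const_mul (-η)).add (hA.mul_const (η - 1))
  have hP : HasDerivAt (fun y : ℝ =>
      lambar / mu * ((-η) * (η * y - y) + (r - η * y) * (η - 1))
        * (lambar * (r - η * y) + mu * (r - y))
      - lambar / mu * ((r - η * y) * (η * y - y)) * (lambar * (-η) + mu * (-1)))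
      ((lambar / mu * ((-η) * (η - 1) + (-η) * (η - 1)))
          * (lambar * (r - η * f) + mu * (r - f))
        + (lambar / mu * ((-η) * (η * f - f) + (r - η * f) * (η - 1)))
          * (lambar * (-η) + mu * (-1))
      - (lambar / mu * ((-η) * (η * f - f) + (r - η * f) * (η - 1)))
          * (lambar * (-η) + mu * (-1))) f := by
    exact ((hN'.const_mul (lambar / mu)).mul hD).sub
      ((hN.const_mul (lambar / mu)).mul_const _)
  have hD2 : HasDerivAt (fun y : ℝ => (lambar * (r - η * y) + mu * (r - y)) ^ 2)
      ((2 : ℕ) * (lambar * (r - η * f) + mu * (r - f)) ^ (2 - 1)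
        * (lambar * (-η) + mu * (-1))) f := hD.pow 2
  have hquot2 := hP.div hD2 (pow_ne_zero 2 hDne)
  have hfb' : HasDerivAt (fun y : ℝ => fbar - y) (-1) f := by
    simpa using (hasDerivAt_id f).const_sub fbar
  have hfb2 : HasDerivAt (fun y : ℝ => (fbar - y) ^ 2)
      ((2 : ℕ) * (fbar - f) ^ (2 - 1) * (-1)) f := hfb'.pow 2
  have hg2 := (hasDerivAt_const f c₂).div hfb2 (pow_ne_zero 2 hfb)
  have H2 := ((hquot2.const_mul c₀).neg).sub hg2
  rw [hF₁def] at *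
  have hval : deriv (fun x : ℝ =>
      -(c₀ * ((lambar / mu * ((-η) * (η * x - x) + (r - η * x) * (η - 1))
            * (lambar * (r - η * x) + mu * (r - x))
          - lambar / mu * ((r - η * x) * (η * x - x)) * (lambar * (-η) + mu * (-1)))
          / (lambar * (r - η * x) + mu * (r - x)) ^ 2))
        - c₂ / (fbar - x) ^ 2) f
      = -(c₀ * ((-2 * lambar * (lambar + mu) * r ^ 2 * (1 - η) ^ 2)
          / (lambar * (r - η * f) + mu * (r - f)) ^ 3))
        - 2 * c₂ / (fbar - f) ^ 3 := by
    refine H2.deriv.trans ?_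
    field_simp
    ring
  rw [hval]
  have hd3 : (lambar * (r - η * f) + mu * (r - f)) ^ 3 < 0 :=
    Odd.pow_neg ⟨1, by norm_num⟩ hDf
  have hCneg : (-2 * lambar * (lambar + mu) * r ^ 2 * (1 - η) ^ 2) < 0 := by
    have h1 : 0 < 1 - η := by linarith
    have h2 : 0 < lambar + mu := by linarith
    nlinarith [mul_pos (mul_pos hlam h2) (mul_pos (pow_pos hr 2) (pow_pos h1 2))]
  have ht1 : 0 < (-2 * lambar * (lambar + mu) * r ^ 2 * (1 - η) ^ 2)
      / (lambar * (r - η * f) + mu * (r - f)) ^ 3 := div_pos_of_neg_of_neg hCneg hd3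
  have ht2 : 0 < 2 * c₂ / (fbar - f) ^ 3 := by positivity
  nlinarith [mul_pos hc₀ ht1]
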